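/- Let ν > −1 and α > 0 be real, and let β ≥ 0, γ ≥ 0. Then ∫₀^∞ e^{−α v²} ĵ_ν(β v) j_ν(γ v) v^{2ν+1} / (2^ν Γ(ν+1)) dv = (2α)^{−(ν+1)} exp((β² − γ²)/(4α)) j_ν(βγ/(2α)). (Weber–Sonine type integral, the analytic core of the identification of the Bessel semigroup; the hypothesis ν > −1 corresponds exactly to dimension δ = 2ν + 2 > 0.) -/

import Mathlib

open Real MeasureTheory

/-- Normalized spherical Bessel function `j_ν(z)`. -/
noncomputable def sphBessel (ν : ℝ) (z : ℝ) : ℝ :=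
  Real.Gamma (ν + 1) *
    ∑' m : ℕ, (-1 : ℝ) ^ m * (z / 2) ^ (2 * m) /
      (Nat.factorial m * Real.Gamma (ν + m + 1))

/-- Imaginary-argument normalized spherical Bessel function `ĵ_ν(z) = j_ν(iz)`. -/
noncomputable def sphBesselI (ν : ℝ) (z : ℝ) : ℝ :=
  Real.Gamma (ν + 1) *
    ∑' m : ℕ, (z / 2) ^ (2 * m) / (Nat.factorial m * Real.Gamma (ν + m + 1))

set_option maxHeartbeats 1000000

open Real MeasureTheory Finset Set
open scoped ENNReal NNReal

namespace WS

lemma Gpos {ν : ℝ} (hν : -1 < ν) (k : ℕ) : 0 < Real.Gamma (ν + k + 1) := by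
  apply Real.Gamma_pos_of_pos
  have : (0:ℝ) ≤ k := Nat.cast_nonneg k
  linarith

lemma norm_sph {ν : ℝ} (hν : -1 < ν) (t : ℝ) (m : ℕ) :
    ‖t ^ m / (m.factorial * Real.Gamma (ν + m + 1))‖
      = |t| ^ m / (m.factorial * Real.Gamma (ν + m + 1)) := by
  have hG := Gpos hν m
  have hfac : (0:ℝ) < m.factorial := by positivity
  rw [norm_div, norm_pow, norm_mul, Real.norm_natCast, Real.norm_eq_abs t,
    Real.norm_eq_abs, abs_of_pos hG]

lemma summable_norm_sph {ν : ℝ} (hν : -1 < ν) (t : ℝ) :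
    Summable fun m : ℕ => ‖t ^ m / (m.factorial * Real.Gamma (ν + m + 1))‖ := by
  apply summable_of_ratio_norm_eventually_le (r := 1/2) (by norm_num)
  have h2t : ∀ᶠ m : ℕ in Filter.atTop, 2 * |t| ≤ m + 1 := by
    filter_upwards [Filter.eventually_ge_atTop ⌈2 * |t|⌉₊] with m hm
    calc 2 * |t| ≤ ⌈2 * |t|⌉₊ := Nat.le_ceil _
    _ ≤ m := Nat.cast_le.mpr hm
    _ ≤ m + 1 := by linarith
  have hnu : ∀ᶠ m : ℕ in Filter.atTop, (1:ℝ) ≤ ν + m + 1 := by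
    filter_upwards [Filter.eventually_ge_atTop ⌈(1:ℝ) - ν⌉₊] with m hm
    have : (1:ℝ) - ν ≤ m := le_trans (Nat.le_ceil _) (Nat.cast_le.mpr hm)
    linarith
  filter_upwards [h2t, hnu] with m hm hm'
  have hG := Gpos hν m
  have hfac : (0:ℝ) < m.factorial := by positivity
  rw [norm_norm, norm_norm, norm_sph hν, norm_sph hν]
  have hGrec : Real.Gamma (ν + (m+1:ℕ) + 1) = (ν + m + 1) * Real.Gamma (ν + m + 1) := by
    have h : ν + ((m:ℝ)+1) + 1 = (ν + m + 1) + 1 := by ring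
    push_cast
    rw [h, Real.Gamma_add_one (by positivity)]
  have heq : |t| ^ (m+1) / ((m+1).factorial * Real.Gamma (ν + (m+1:ℕ) + 1))
      = (|t| ^ m / (m.factorial * Real.Gamma (ν + m + 1))) * (|t| / ((m+1) * (ν + m + 1))) := by
    rw [hGrec, Nat.factorial_succ, pow_succ, div_mul_div_comm]
    congr 1
    push_cast
    ring
  rw [heq, mul_comm (1/2 : ℝ)]
  apply mul_le_mul_of_nonneg_left _ (by positivity)
  rw [div_le_div_iff₀ (by positivity) (by norm_num), one_mul]
  nlinarith [abs_nonneg t]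

lemma summable_sph {ν : ℝ} (hν : -1 < ν) (t : ℝ) :
    Summable fun m : ℕ => t ^ m / (m.factorial * Real.Gamma (ν + m + 1)) :=
  (summable_norm_sph hν t).of_norm


lemma prod_shift (m : ℕ) (c : ℝ) :
    ∏ j ∈ range m, (c + 1 + j) =
      ∏ j ∈ range m, (c + j) + m * ∏ j ∈ range (m-1), (c + 1 + j) := by
  cases m with
  | zero => simp
  | succ d =>
    have h1 : ∏ j ∈ range (d+1), (c + j) = (∏ j ∈ range d, (c + 1 + j)) * c := by
      rw [Finset.prod_range_succ']
      congr 1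
      · exact Finset.prod_congr rfl fun j _ => by push_cast; ring
      · norm_num
    rw [Finset.prod_range_succ, h1]
    have : (d+1:ℕ) - 1 = d := rfl
    rw [this]
    push_cast
    ring

lemma choose_mul_fac {m k : ℕ} :
    ((m.choose (k+1) : ℝ) * (k+1).factorial) = m * ((m-1).choose k) * k.factorial := by
  cases m with
  | zero => simp
  | succ d =>
    have h := Nat.add_one_mul_choose_eq d k
    have h' : (d+1) * d.choose k = (d+1).choose (k+1) * (k+1) := h
    have : ((d+1:ℕ):ℝ) * (d.choose k : ℝ) = ((d+1).choose (k+1) : ℝ) * (k+1) := by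
      exact_mod_cast congrArg (Nat.cast : ℕ → ℝ) h'
    rw [Nat.factorial_succ]
    push_cast
    push_cast at this
    nlinarith [this]

lemma vander (n : ℕ) : ∀ (x : ℝ) (m : ℕ),
    ∑ k ∈ range (n+1), (m.choose k : ℝ) * (n.choose k) * (k.factorial) *
        ∏ j ∈ range (m-k), (x + k + j)
      = ∏ j ∈ range m, (x + n + j) := by
  induction n with
  | zero =>
    intro x m
    simp
  | succ n IH =>
    intro x m
    rw [Finset.sum_range_succ']
    have hsplit : ∀ k ∈ range (n+1),
        (m.choose (k+1) : ℝ) * ((n+1).choose (k+1)) * ((k+1).factorial) *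
            ∏ j ∈ range (m-(k+1)), (x + (k+1:ℕ) + j)
          = ((m.choose (k+1) : ℝ) * (n.choose (k+1)) * ((k+1).factorial) *
              ∏ j ∈ range (m-(k+1)), (x + (k+1:ℕ) + j))
            + m * ((m-1).choose k : ℝ) * (n.choose k) * (k.factorial) *
              ∏ j ∈ range ((m-1)-k), ((x+1) + k + j) := by
      intro k _
      have hcc : ((n+1).choose (k+1) : ℝ) = (n.choose k : ℝ) + (n.choose (k+1) : ℝ) := by
        rw [Nat.choose_succ_succ']
        push_cast; ring
      have hprod : ∏ j ∈ range (m-(k+1)), (x + (k+1:ℕ) + j)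
          = ∏ j ∈ range ((m-1)-k), ((x+1) + k + j) := by
        rw [show m - (k+1) = (m-1) - k by omega]
        exact Finset.prod_congr rfl fun j _ => by push_cast; ring
      rw [hcc, hprod]
      have hmf := choose_mul_fac (m := m) (k := k)
      set P : ℝ := ∏ j ∈ range ((m-1)-k), ((x+1) + k + j) with hP
      linear_combination ((n.choose k : ℝ) * P) * hmf
    rw [Finset.sum_congr rfl hsplit, Finset.sum_add_distrib]
    have key : (∑ k ∈ range (n + 1), (m.choose (k+1):ℝ) * (n.choose (k+1)) * ((k+1).factorial) *
          ∏ j ∈ range (m - (k+1)), (x + (k+1:ℕ) + j)) +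
        (m.choose 0:ℝ) * ((n+1).choose 0) * (Nat.factorial 0) * ∏ j ∈ range (m - 0), (x + (0:ℕ) + j) =
        ∏ j ∈ range m, (x + n + j) := by
      rw [show ((n+1).choose 0) = n.choose 0 by simp,
        ← Finset.sum_range_succ' (fun k => (m.choose k:ℝ) * (n.choose k) * (k.factorial) *
          ∏ j ∈ range (m - k), (x + k + j)) (n+1),
        Finset.sum_range_succ]
      simp only [Nat.choose_succ_self, Nat.cast_zero, mul_zero, zero_mul, add_zero]
      exact IH x m
    have keyB : (∑ k ∈ range (n + 1), (m:ℝ) * ((m-1).choose k) * (n.choose k) * (k.factorial) *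
          ∏ j ∈ range ((m-1) - k), ((x+1) + k + j)) =
        m * ∏ j ∈ range (m-1), ((x+1) + n + j) := by
      rw [← IH (x+1) (m-1), Finset.mul_sum]
      exact Finset.sum_congr rfl fun k _ => by ring
    rw [add_right_comm, key, keyB]
    have h1 : (∏ j ∈ range m, (x + ((n+1:ℕ):ℝ) + j)) = ∏ j ∈ range m, ((x + n) + 1 + j) :=
      Finset.prod_congr rfl fun j _ => by push_cast; ring
    have h2 : (∏ j ∈ range (m-1), (x + 1 + (n:ℝ) + j)) = ∏ j ∈ range (m-1), ((x + n) + 1 + j) :=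
      Finset.prod_congr rfl fun j _ => by ring
    rw [h1, h2, prod_shift m (x + n)]


lemma Gamma_shift {z : ℝ} (hz : 0 < z) (d : ℕ) :
    Real.Gamma (z + d) = Real.Gamma z * ∏ j ∈ range d, (z + j) := by
  induction d with
  | zero => simp
  | succ d IH =>
    have h : z + ((d+1:ℕ):ℝ) = (z + d) + 1 := by push_cast; ring
    rw [h, Real.Gamma_add_one (by positivity), IH, Finset.prod_range_succ]
    ring

lemma coeff_id {ν : ℝ} (hν : -1 < ν) (m n : ℕ) :
    ∑ k ∈ range (n+1),
        (m.choose k : ℝ) * (n.choose k) * (k.factorial) / Real.Gamma (ν + k + 1)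
      = Real.Gamma (ν + m + n + 1) / (Real.Gamma (ν + m + 1) * Real.Gamma (ν + n + 1)) := by
  have hΓm := Gpos hν m
  have hΓn := Gpos hν n
  have h1 : ∑ k ∈ range (n+1), (m.choose k : ℝ) * (n.choose k) * (k.factorial) *
      (Real.Gamma (ν + m + 1) / Real.Gamma (ν + k + 1))
      = Real.Gamma (ν + m + n + 1) / Real.Gamma (ν + n + 1) := by
    have hv := vander n (ν + 1) m
    have hR : ∏ j ∈ range m, ((ν+1) + n + j) =
        Real.Gamma (ν + m + n + 1) / Real.Gamma (ν + n + 1) := by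
      have := Gamma_shift (z := ν + n + 1) (by have : (0:ℝ) ≤ n := Nat.cast_nonneg n; linarith) m
      rw [show ν + (n:ℝ) + 1 + m = ν + m + n + 1 by ring] at this
      rw [this, show (∏ j ∈ range m, ((ν+1) + n + j)) = ∏ j ∈ range m, (ν + n + 1 + j) from
        Finset.prod_congr rfl fun j _ => by ring]
      field_simp
    have hL : ∀ k ∈ range (n+1),
        (m.choose k : ℝ) * (n.choose k) * (k.factorial) * ∏ j ∈ range (m-k), ((ν+1) + k + j)
        = (m.choose k : ℝ) * (n.choose k) * (k.factorial) *
          (Real.Gamma (ν + m + 1) / Real.Gamma (ν + k + 1)) := by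
      intro k _
      by_cases hk : k ≤ m
      · congr 1
        have hΓk := Gpos hν k
        have := Gamma_shift (z := ν + k + 1)
          (by have : (0:ℝ) ≤ k := Nat.cast_nonneg k; linarith) (m - k)
        rw [show ν + (k:ℝ) + 1 + ((m-k:ℕ):ℝ) = ν + m + 1 by
          rw [Nat.cast_sub hk]; ring] at this
        rw [this, show (∏ j ∈ range (m-k), ((ν+1) + k + j)) =
          ∏ j ∈ range (m-k), (ν + k + 1 + j) from
          Finset.prod_congr rfl fun j _ => by ring]
        field_simp
      · rw [Nat.choose_eq_zero_of_lt (by omega)]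
        simp
    rw [← Finset.sum_congr rfl hL, hv, hR]
  calc ∑ k ∈ range (n+1),
        (m.choose k : ℝ) * (n.choose k) * (k.factorial) / Real.Gamma (ν + k + 1)
      = (∑ k ∈ range (n+1), (m.choose k : ℝ) * (n.choose k) * (k.factorial) *
          (Real.Gamma (ν + m + 1) / Real.Gamma (ν + k + 1))) / Real.Gamma (ν + m + 1) := by
        rw [Finset.sum_div]
        refine Finset.sum_congr rfl fun k _ => ?_
        have hΓk := Gpos hν k
        field_simp
    _ = Real.Gamma (ν + m + n + 1) / (Real.Gamma (ν + m + 1) * Real.Gamma (ν + n + 1)) := by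
        rw [h1, div_div, mul_comm (Real.Gamma (ν + n + 1))]


/-- the triple-index function -/
noncomputable def hfun (ν x y : ℝ) (p : (ℕ × ℕ) × ℕ) : ℝ :=
  (x ^ p.1.1 / p.1.1.factorial) * (y ^ p.1.2 / p.1.2.factorial) *
    ((x*y) ^ p.2 / (p.2.factorial * Real.Gamma (ν + p.2 + 1)))

/-- the reindexed, guarded function -/
noncomputable def Hfun (ν x y : ℝ) (q : (ℕ × ℕ) × ℕ) : ℝ :=
  if q.2 ≤ q.1.1 ∧ q.2 ≤ q.1.2 then hfun ν x y ((q.1.1 - q.2, q.1.2 - q.2), q.2) else 0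

def ψ : (ℕ × ℕ) × ℕ → (ℕ × ℕ) × ℕ := fun p => ((p.1.1 + p.2, p.1.2 + p.2), p.2)

lemma ψ_inj : Function.Injective ψ := by
  rintro ⟨⟨a, b⟩, k⟩ ⟨⟨a', b'⟩, k'⟩ h
  simp only [ψ, Prod.mk.injEq] at h
  obtain ⟨⟨h1, h2⟩, h3⟩ := h
  subst h3
  simp_all [Nat.add_right_cancel h1, Nat.add_right_cancel h2]

lemma H_comp (ν x y : ℝ) : (Hfun ν x y) ∘ ψ = hfun ν x y := by
  funext p
  obtain ⟨⟨a, b⟩, k⟩ := p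
  simp [Hfun, ψ, Nat.le_add_left]

lemma H_supp (ν x y : ℝ) : Function.support (Hfun ν x y) ⊆ Set.range ψ := by
  rintro ⟨⟨m, n⟩, k⟩ hq
  simp only [Function.mem_support, Hfun] at hq
  by_cases h : k ≤ m ∧ k ≤ n
  · exact ⟨((m - k, n - k), k), by simp [ψ, Nat.sub_add_cancel h.1, Nat.sub_add_cancel h.2]⟩
  · simp [h] at hq

lemma summable_hfun {ν : ℝ} (hν : -1 < ν) (x y : ℝ) : Summable (hfun ν x y) := by
  have h1 : Summable fun a : ℕ => ‖x ^ a / a.factorial‖ := by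
    have := Real.summable_pow_div_factorial |x|
    refine this.congr fun a => ?_
    rw [norm_div, norm_pow, Real.norm_eq_abs, Real.norm_natCast]
  have h2 : Summable fun b : ℕ => ‖y ^ b / b.factorial‖ := by
    have := Real.summable_pow_div_factorial |y|
    refine this.congr fun a => ?_
    rw [norm_div, norm_pow, Real.norm_eq_abs, Real.norm_natCast]
  have h12 : Summable fun q : ℕ × ℕ =>
      ‖(x ^ q.1 / q.1.factorial) * (y ^ q.2 / q.2.factorial)‖ := h1.mul_norm h2
  have h3 := summable_norm_sph hν (x*y)
  exact (h12.mul_norm h3).of_norm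

lemma Hzero (ν x y : ℝ) : ∀ q ∉ Set.range ψ, Hfun ν x y q = 0 := fun q hq => by
  by_contra h
  exact hq (H_supp ν x y h)

lemma summable_Hfun {ν : ℝ} (hν : -1 < ν) (x y : ℝ) : Summable (Hfun ν x y) :=
  (Function.Injective.summable_iff ψ_inj (Hzero ν x y)).mp
    (by rw [H_comp]; exact summable_hfun hν x y)

lemma tsum_hfun {ν : ℝ} (hν : -1 < ν) (x y : ℝ) :
    ∑' p, hfun ν x y p =
      Real.exp x * Real.exp y *
        ∑' k : ℕ, (x*y) ^ k / (k.factorial * Real.Gamma (ν + k + 1)) := by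
  have h1 : Summable fun a : ℕ => ‖x ^ a / a.factorial‖ := by
    have := Real.summable_pow_div_factorial |x|
    refine this.congr fun a => ?_
    rw [norm_div, norm_pow, Real.norm_eq_abs, Real.norm_natCast]
  have h2 : Summable fun b : ℕ => ‖y ^ b / b.factorial‖ := by
    have := Real.summable_pow_div_factorial |y|
    refine this.congr fun a => ?_
    rw [norm_div, norm_pow, Real.norm_eq_abs, Real.norm_natCast]
  have h12 : Summable fun q : ℕ × ℕ =>
      ‖(x ^ q.1 / q.1.factorial) * (y ^ q.2 / q.2.factorial)‖ := h1.mul_norm h2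
  have h3 := summable_norm_sph hν (x*y)
  have e1 : Real.exp x = ∑' a : ℕ, x ^ a / a.factorial := by
    rw [Real.exp_eq_exp_ℝ, NormedSpace.exp_eq_tsum_div]
  have e2 : Real.exp y = ∑' b : ℕ, y ^ b / b.factorial := by
    rw [Real.exp_eq_exp_ℝ, NormedSpace.exp_eq_tsum_div]
  rw [e1, e2, tsum_mul_tsum_of_summable_norm h1 h2, tsum_mul_tsum_of_summable_norm h12 h3]
  exact tsum_congr fun p => by simp [hfun]



namespace WS2
open WS

noncomputable def term (ν x y : ℝ) (p : ℕ × ℕ) : ℝ :=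
  x ^ p.1 * y ^ p.2 * Real.Gamma (ν + p.1 + p.2 + 1) /
    (p.1.factorial * p.2.factorial * Real.Gamma (ν + p.1 + 1) * Real.Gamma (ν + p.2 + 1))

lemma Hfun_eq {ν : ℝ} (hν : -1 < ν) (x y : ℝ) (m n k : ℕ) (hkn : k ≤ n) :
    Hfun ν x y ((m, n), k) =
      x ^ m * y ^ n * ((m.choose k : ℝ) * (n.choose k) * (k.factorial) /
        Real.Gamma (ν + k + 1)) / (m.factorial * n.factorial) := by
  have hΓk := Gpos hν k
  by_cases hk : k ≤ m
  · obtain ⟨a, rfl⟩ : ∃ a, m = a + k := ⟨m - k, by omega⟩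
    obtain ⟨b, rfl⟩ : ∃ b, n = b + k := ⟨n - k, by omega⟩
    rw [Hfun, if_pos ⟨Nat.le_add_left k a, Nat.le_add_left k b⟩]
    simp only [hfun, Nat.add_sub_cancel]
    rw [Nat.cast_choose ℝ (Nat.le_add_left k a), Nat.cast_choose ℝ (Nat.le_add_left k b)]
    simp only [Nat.add_sub_cancel]
    have f1 : (0:ℝ) < (a+k).factorial := by positivity
    have f2 : (0:ℝ) < (b+k).factorial := by positivity
    have f3 : (0:ℝ) < a.factorial := by positivity
    have f4 : (0:ℝ) < b.factorial := by positivity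
    have f5 : (0:ℝ) < k.factorial := by positivity
    field_simp
    ring
  · rw [Hfun, if_neg (show ¬(k ≤ m ∧ k ≤ n) by omega),
      Nat.choose_eq_zero_of_lt (by omega)]
    simp

lemma inner_sum {ν : ℝ} (hν : -1 < ν) (x y : ℝ) (m n : ℕ) :
    ∑' k : ℕ, Hfun ν x y ((m, n), k) = term ν x y (m, n) := by
  rw [tsum_eq_sum (s := range (n+1)) (fun k hk => by
    rw [Hfun, if_neg (show ¬(k ≤ m ∧ k ≤ n) by simp at hk; omega)])]
  have : ∀ k ∈ range (n+1), Hfun ν x y ((m, n), k) =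
      (x ^ m * y ^ n / (m.factorial * n.factorial)) *
        ((m.choose k : ℝ) * (n.choose k) * (k.factorial) / Real.Gamma (ν + k + 1)) := by
    intro k hk
    rw [Hfun_eq hν x y m n k (by simp at hk; omega)]
    ring
  rw [Finset.sum_congr rfl this, ← Finset.mul_sum, coeff_id hν m n]
  simp only [term]
  rw [div_mul_div_comm]
  congr 1 <;> ring

lemma summable_term {ν : ℝ} (hν : -1 < ν) (x y : ℝ) : Summable (term ν x y) := by
  have hS := summable_Hfun hν x y
  have h := hS.hasSum.prod_fiberwise (fun p => (hS.prod_factor p).hasSum)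
  exact h.summable.congr fun p => by
    obtain ⟨m, n⟩ := p
    exact inner_sum hν x y m n

lemma core_tsum {ν : ℝ} (hν : -1 < ν) (x y : ℝ) :
    ∑' p : ℕ × ℕ, term ν x y p =
      Real.exp x * Real.exp y *
        ∑' k : ℕ, (x*y) ^ k / (k.factorial * Real.Gamma (ν + k + 1)) := by
  have hS := summable_Hfun hν x y
  calc ∑' p : ℕ × ℕ, term ν x y p
      = ∑' (p : ℕ × ℕ) (k : ℕ), Hfun ν x y (p, k) := by
        refine tsum_congr fun p => ?_
        obtain ⟨m, n⟩ := p
        exact (inner_sum hν x y m n).symm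
    _ = ∑' q : (ℕ × ℕ) × ℕ, Hfun ν x y q := (hS.tsum_prod).symm
    _ = ∑' p : (ℕ × ℕ) × ℕ, hfun ν x y p := by
        rw [← ψ_inj.tsum_eq (H_supp ν x y)]
        exact tsum_congr fun p => congrFun (H_comp ν x y) p
    _ = _ := tsum_hfun hν x y

end WS2
lemma gauss_moment {α s : ℝ} (hα : 0 < α) (hs : -1 < s) :
    ∫ v in Set.Ioi (0:ℝ), v ^ s * Real.exp (-α * v^2)
      = α ^ (-(s+1)/2) * Real.Gamma ((s+1)/2) / 2 := by
  have h := integral_rpow_mul_exp_neg_mul_rpow (p := 2) (q := s) (b := α)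
    (by norm_num) hs hα
  simp_rw [Real.rpow_two] at h
  rw [h]
  ring

lemma mono_eq {ν α : ℝ} (m n : ℕ) (b c : ℝ) : ∀ v ∈ Set.Ioi (0:ℝ),
    (b*v)^(2*m) * (c*v)^(2*n) * (Real.exp (-α*v^2) * v^(2*ν+1))
      = (b^(2*m)*c^(2*n)) * (v ^ (2*ν+1+2*((m+n:ℕ):ℝ)) * Real.exp (-α*v^2)) := by
  intro v hv
  have hv0 : (0:ℝ) < v := hv
  have e1 : v ^ (2*ν+1+2*((m+n:ℕ):ℝ)) = v^(2*ν+1) * v^((2*m:ℕ):ℝ) * v^((2*n:ℕ):ℝ) := by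
    rw [← Real.rpow_add hv0, ← Real.rpow_add hv0]
    congr 1
    push_cast
    ring
  rw [e1, Real.rpow_natCast, Real.rpow_natCast, mul_pow, mul_pow]
  ring

lemma exp_bound {ν : ℝ} (hν : -1 < ν) (m n : ℕ) :
    (-1:ℝ) < 2*ν+1+2*((m+n:ℕ):ℝ) := by
  have : (0:ℝ) ≤ ((m+n:ℕ):ℝ) := Nat.cast_nonneg _
  linarith

lemma integrable_mono {ν α : ℝ} (hν : -1 < ν) (hα : 0 < α) (m n : ℕ) (b c : ℝ) :
    IntegrableOn (fun v => (b*v)^(2*m) * (c*v)^(2*n) * (Real.exp (-α*v^2) * v^(2*ν+1)))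
      (Set.Ioi (0:ℝ)) := by
  apply IntegrableOn.congr_fun
    (((integrableOn_rpow_mul_exp_neg_mul_sq hα (exp_bound hν m n)).const_mul
      (b^(2*m)*c^(2*n))))
    (fun v hv => (mono_eq m n b c v hv).symm) measurableSet_Ioi

lemma integral_mono {ν α : ℝ} (hν : -1 < ν) (hα : 0 < α) (m n : ℕ) (b c : ℝ) :
    ∫ v in Set.Ioi (0:ℝ), (b*v)^(2*m) * (c*v)^(2*n) * (Real.exp (-α*v^2) * v^(2*ν+1)) =
      b^(2*m) * c^(2*n) *
        (α ^ (-(ν+1+((m+n:ℕ):ℝ))) * Real.Gamma (ν+1+((m+n:ℕ):ℝ)) / 2) := by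
  rw [setIntegral_congr_fun measurableSet_Ioi (mono_eq m n b c), integral_const_mul,
    gauss_moment hα (exp_bound hν m n),
    show (2*ν+1+2*((m+n:ℕ):ℝ)+1)/2 = ν+1+((m+n:ℕ):ℝ) by ring,
    show -(2*ν+1+2*((m+n:ℕ):ℝ)+1)/2 = -(ν+1+((m+n:ℕ):ℝ)) by ring]


lemma Gpos' {ν : ℝ} (hν : -1 < ν) (m n : ℕ) : 0 < Real.Gamma (ν + m + n + 1) := by
  have := Gpos hν (m + n)
  rwa [show ν + ((m+n:ℕ):ℝ) + 1 = ν + m + n + 1 by push_cast; ring] at this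

lemma term_nonneg {ν : ℝ} (hν : -1 < ν) {x y : ℝ} (hx : 0 ≤ x) (hy : 0 ≤ y) (p : ℕ × ℕ) :
    0 ≤ WS2.term ν x y p := by
  obtain ⟨m, n⟩ := p
  have h1 := Gpos' hν m n
  have h2 := Gpos hν m
  have h3 := Gpos hν n
  apply div_nonneg
  · exact mul_nonneg (mul_nonneg (pow_nonneg hx m) (pow_nonneg hy n)) h1.le
  · positivity

lemma val_eq_gen {ν α β γ : ℝ} (hν : -1 < ν) (hα : 0 < α) (m n : ℕ) (X Y ε : ℝ)
    (hX : X ^ m = (β/2)^(2*m) * ((α:ℝ)^m)⁻¹)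
    (hY : Y ^ n = ε * ((γ/2)^(2*n) * ((α:ℝ)^n)⁻¹)) :
    (Real.Gamma (ν+1) * Real.Gamma (ν+1) / ((2:ℝ)^ν * Real.Gamma (ν+1))) *
      ((β/2)^(2*m) * (γ/2)^(2*n) *
        (α ^ (-(ν+1+((m+n:ℕ):ℝ))) * Real.Gamma (ν+1+((m+n:ℕ):ℝ)) / 2)) *
      (ε / ((m.factorial * Real.Gamma (ν+m+1)) * (n.factorial * Real.Gamma (ν+n+1))))
    = (Real.Gamma (ν+1) / (2:ℝ)^ν * (α ^ (-(ν+1)) / 2)) * WS2.term ν X Y (m, n) := by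
  have hΓm := Gpos hν m
  have hΓn := Gpos hν n
  have hΓmn := Gpos' hν m n
  have hΓ1 : 0 < Real.Gamma (ν+1) := by simpa using Gpos hν 0
  have h2ν : (0:ℝ) < (2:ℝ)^ν := Real.rpow_pos_of_pos two_pos ν
  have hrp : α ^ (-(ν+1+((m+n:ℕ):ℝ))) = α ^ (-(ν+1)) * ((α^m * α^n))⁻¹ := by
    rw [show -(ν+1+((m+n:ℕ):ℝ)) = -(ν+1) + -((m+n:ℕ):ℝ) by ring, Real.rpow_add hα]
    congr 1
    rw [Real.rpow_neg hα.le, Real.rpow_natCast, pow_add]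
  have hΓarg : Real.Gamma (ν+1+((m+n:ℕ):ℝ)) = Real.Gamma (ν+m+n+1) := by
    congr 1
    push_cast
    ring
  simp only [WS2.term]
  rw [hrp, hΓarg, hX, hY]
  have hfm : (0:ℝ) < m.factorial := by positivity
  have hfn : (0:ℝ) < n.factorial := by positivity
  have ham : (α:ℝ)^m ≠ 0 := by positivity
  have han : (α:ℝ)^n ≠ 0 := by positivity
  field_simp

end WS

/-- Weber–Sonine type integral: the analytic core of the identification of the Bessel
semigroup, valid exactly for `ν > -1`, i.e. dimension `δ = 2ν + 2 > 0`. -/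
theorem weber_sonine
    (ν α β γ : ℝ) (hν : -1 < ν) (hα : 0 < α) (hβ : 0 ≤ β) (hγ : 0 ≤ γ) :
    ∫ v in Set.Ioi (0 : ℝ),
        Real.exp (-α * v ^ 2) * sphBesselI ν (β * v) * sphBessel ν (γ * v) *
          v ^ (2 * ν + 1) / ((2 : ℝ) ^ ν * Real.Gamma (ν + 1)) =
      (2 * α) ^ (-(ν + 1)) * Real.exp ((β ^ 2 - γ ^ 2) / (4 * α)) *
        sphBessel ν (β * γ / (2 * α)) := by
  have hΓ1 : 0 < Real.Gamma (ν + 1) := by simpa using WS.Gpos hν 0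
  have h2ν : (0:ℝ) < (2:ℝ) ^ ν := Real.rpow_pos_of_pos two_pos ν
  set x : ℝ := β ^ 2 / (4 * α) with hxd
  set y : ℝ := γ ^ 2 / (4 * α) with hyd
  have hx0 : 0 ≤ x := by positivity
  have hy0 : 0 ≤ y := by positivity
  set C0 : ℝ := Real.Gamma (ν+1) * Real.Gamma (ν+1) / ((2:ℝ)^ν * Real.Gamma (ν+1)) with hC0
  set F : ℕ × ℕ → ℝ → ℝ := fun p v =>
    C0 * ((β/2*v)^(2*p.1) * (γ/2*v)^(2*p.2) * (Real.exp (-α*v^2) * v^(2*ν+1))) *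
      ((-1:ℝ)^p.2 / ((p.1.factorial * Real.Gamma (ν+p.1+1)) *
        (p.2.factorial * Real.Gamma (ν+p.2+1)))) with hF
  -- the powers hX, hY
  have hX : x ^ 1 = x := pow_one x
  have hXm : ∀ m : ℕ, x ^ m = (β/2)^(2*m) * ((α:ℝ)^m)⁻¹ := by
    intro m
    rw [hxd, show β^2/(4*α) = (β/2)^2 * α⁻¹ by ring, mul_pow, ← pow_mul, inv_pow]
  have hYn : ∀ n : ℕ, y ^ n = (γ/2)^(2*n) * ((α:ℝ)^n)⁻¹ := by
    intro n
    rw [hyd, show γ^2/(4*α) = (γ/2)^2 * α⁻¹ by ring, mul_pow, ← pow_mul, inv_pow]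
  -- Step 1: pointwise expansion of the integrand
  have hrw : ∀ v ∈ Set.Ioi (0:ℝ),
      Real.exp (-α * v ^ 2) * sphBesselI ν (β * v) * sphBessel ν (γ * v) *
          v ^ (2 * ν + 1) / ((2 : ℝ) ^ ν * Real.Gamma (ν + 1))
        = ∑' p : ℕ × ℕ, F p v := by
    intro v hv
    have hu : Summable fun m : ℕ =>
        ‖(β*v/2)^(2*m) / (m.factorial * Real.Gamma (ν+m+1))‖ := by
      refine (WS.summable_norm_sph hν ((β*v/2)^2)).congr fun m => ?_
      rw [← pow_mul]
    have hw : Summable fun m : ℕ =>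
        ‖(-1:ℝ)^m * (γ*v/2)^(2*m) / (m.factorial * Real.Gamma (ν+m+1))‖ := by
      refine (WS.summable_norm_sph hν ((γ*v/2)^2)).congr fun m => ?_
      rw [← pow_mul, show ((-1:ℝ)^m * (γ*v/2)^(2*m)) / (m.factorial * Real.Gamma (ν+m+1))
        = ((-1:ℝ)^m) * ((γ*v/2)^(2*m) / (m.factorial * Real.Gamma (ν+m+1))) from by ring,
        norm_mul]
      simp
    have hprod : sphBesselI ν (β*v) * sphBessel ν (γ*v) =
        Real.Gamma (ν+1) * Real.Gamma (ν+1) *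
          ∑' p : ℕ × ℕ, ((β*v/2)^(2*p.1) / (p.1.factorial * Real.Gamma (ν+p.1+1))) *
            ((-1:ℝ)^p.2 * (γ*v/2)^(2*p.2) / (p.2.factorial * Real.Gamma (ν+p.2+1))) := by
      rw [sphBesselI, sphBessel, mul_mul_mul_comm, tsum_mul_tsum_of_summable_norm hu hw]
    rw [mul_assoc (Real.exp (-α*v^2)), hprod,
      show Real.exp (-α*v^2) * (Real.Gamma (ν+1) * Real.Gamma (ν+1) *
          ∑' p : ℕ × ℕ, ((β*v/2)^(2*p.1) / (p.1.factorial * Real.Gamma (ν+p.1+1))) *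
            ((-1:ℝ)^p.2 * (γ*v/2)^(2*p.2) / (p.2.factorial * Real.Gamma (ν+p.2+1)))) *
          v ^ (2*ν+1) / ((2:ℝ)^ν * Real.Gamma (ν+1))
        = (C0 * (Real.exp (-α*v^2) * v^(2*ν+1))) *
          ∑' p : ℕ × ℕ, ((β*v/2)^(2*p.1) / (p.1.factorial * Real.Gamma (ν+p.1+1))) *
            ((-1:ℝ)^p.2 * (γ*v/2)^(2*p.2) / (p.2.factorial * Real.Gamma (ν+p.2+1)))
        from by rw [hC0]; ring,
      ← tsum_mul_left]
    refine tsum_congr fun p => ?_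
    rw [hF]
    rw [show β*v/2 = β/2*v by ring, show γ*v/2 = γ/2*v by ring]
    ring
  rw [MeasureTheory.setIntegral_congr_fun measurableSet_Ioi hrw]
  -- measurability
  have hmeas : ∀ p : ℕ × ℕ, AEStronglyMeasurable (F p)
      (MeasureTheory.volume.restrict (Set.Ioi (0:ℝ))) := by
    intro p
    apply ContinuousOn.aestronglyMeasurable _ measurableSet_Ioi
    have hcontR : ContinuousOn (fun v : ℝ => v ^ (2*ν+1)) (Set.Ioi 0) := fun z hz =>
      (Real.continuousAt_rpow_const z _ (Or.inl (ne_of_gt hz))).continuousWithinAt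
    rw [hF]
    refine ContinuousOn.mul (ContinuousOn.mul continuousOn_const ?_) continuousOn_const
    refine ContinuousOn.mul (ContinuousOn.mul ?_ ?_) (ContinuousOn.mul ?_ hcontR)
    · exact ((continuous_const.mul continuous_id).pow _).continuousOn
    · exact ((continuous_const.mul continuous_id).pow _).continuousOn
    · exact (Real.continuous_exp.comp (continuous_const.mul (continuous_pow 2))).continuousOn
  -- the absolute-value integrand
  have hFabs_int : ∀ m n : ℕ, MeasureTheory.IntegrableOn (fun v =>
      (C0 * ((β/2*v)^(2*m) * (γ/2*v)^(2*n) * (Real.exp (-α*v^2) * v^(2*ν+1)))) *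
        ((1:ℝ) / ((m.factorial * Real.Gamma (ν+m+1)) * (n.factorial * Real.Gamma (ν+n+1)))))
      (Set.Ioi (0:ℝ)) := fun m n =>
    ((WS.integrable_mono hν hα m n (β/2) (γ/2)).const_mul C0).mul_const _
  have hC0nn : 0 ≤ C0 := by rw [hC0]; positivity
  have hFabs_nn : ∀ m n : ℕ, ∀ v ∈ Set.Ioi (0:ℝ), 0 ≤
      (C0 * ((β/2*v)^(2*m) * (γ/2*v)^(2*n) * (Real.exp (-α*v^2) * v^(2*ν+1)))) *
        ((1:ℝ) / ((m.factorial * Real.Gamma (ν+m+1)) * (n.factorial * Real.Gamma (ν+n+1)))) := by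
    intro m n v hv
    have hv0 : (0:ℝ) ≤ v := le_of_lt hv
    have h1 : 0 ≤ v ^ (2*ν+1) := Real.rpow_nonneg hv0 _
    have h2 : 0 ≤ (β/2*v)^(2*m) := Even.pow_nonneg (even_two_mul m) _
    have h3 : 0 ≤ (γ/2*v)^(2*n) := Even.pow_nonneg (even_two_mul n) _
    have h4 := WS.Gpos hν m
    have h5 := WS.Gpos hν n
    have h6 : (0:ℝ) ≤ 1 / ((m.factorial * Real.Gamma (ν+m+1)) *
        (n.factorial * Real.Gamma (ν+n+1))) := by positivity
    exact mul_nonneg (mul_nonneg hC0nn (mul_nonneg (mul_nonneg h2 h3)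
      (mul_nonneg (Real.exp_nonneg _) h1))) h6
  -- value of the absolute integral
  have habs_val : ∀ m n : ℕ, (∫ v in Set.Ioi (0:ℝ),
      (C0 * ((β/2*v)^(2*m) * (γ/2*v)^(2*n) * (Real.exp (-α*v^2) * v^(2*ν+1)))) *
        ((1:ℝ) / ((m.factorial * Real.Gamma (ν+m+1)) * (n.factorial * Real.Gamma (ν+n+1)))))
      = (Real.Gamma (ν+1) / (2:ℝ)^ν * (α ^ (-(ν+1)) / 2)) * WS.WS2.term ν x y (m, n) := by
    intro m n
    rw [MeasureTheory.integral_mul_const, MeasureTheory.integral_const_mul,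
      WS.integral_mono hν hα m n (β/2) (γ/2), hC0]
    exact WS.val_eq_gen hν hα m n x y 1 (hXm m) (by rw [one_mul]; exact hYn n)
  -- value of the signed integral
  have hval : ∀ p : ℕ × ℕ, (∫ v in Set.Ioi (0:ℝ), F p v)
      = (Real.Gamma (ν+1) / (2:ℝ)^ν * (α ^ (-(ν+1)) / 2)) * WS.WS2.term ν x (-y) p := by
    rintro ⟨m, n⟩
    rw [hF]
    rw [MeasureTheory.integral_mul_const, MeasureTheory.integral_const_mul,
      WS.integral_mono hν hα m n (β/2) (γ/2), hC0]
    refine WS.val_eq_gen hν hα m n x (-y) ((-1:ℝ)^n) (hXm m) ?_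
    rw [neg_pow, hYn n]
  -- the lintegral bound
  have hlint_p : ∀ p : ℕ × ℕ, (∫⁻ v in Set.Ioi (0:ℝ), ‖F p v‖₊)
      = ENNReal.ofReal ((Real.Gamma (ν+1) / (2:ℝ)^ν * (α ^ (-(ν+1)) / 2)) *
          WS.WS2.term ν x y p) := by
    rintro ⟨m, n⟩
    have h1 : ∀ v : ℝ, (‖F (m, n) v‖₊ : ℝ≥0∞) =
        ‖(C0 * ((β/2*v)^(2*m) * (γ/2*v)^(2*n) * (Real.exp (-α*v^2) * v^(2*ν+1)))) *
          ((1:ℝ) / ((m.factorial * Real.Gamma (ν+m+1)) *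
            (n.factorial * Real.Gamma (ν+n+1))))‖₊ := by
      intro v
      have : F (m, n) v = ((-1:ℝ)^n) *
          ((C0 * ((β/2*v)^(2*m) * (γ/2*v)^(2*n) * (Real.exp (-α*v^2) * v^(2*ν+1)))) *
            ((1:ℝ) / ((m.factorial * Real.Gamma (ν+m+1)) *
              (n.factorial * Real.Gamma (ν+n+1))))) := by
        rw [hF]; ring
      rw [this, nnnorm_mul]
      simp
    rw [MeasureTheory.lintegral_congr h1]
    rw [MeasureTheory.lintegral_congr_ae ((MeasureTheory.ae_restrict_mem
      measurableSet_Ioi).mono fun v hv =>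
        (show ((‖_‖₊ : ℝ≥0∞)) = _ from Real.enorm_eq_ofReal (hFabs_nn m n v hv)))]
    rw [← MeasureTheory.ofReal_integral_eq_lintegral_ofReal (hFabs_int m n)
      (((MeasureTheory.ae_restrict_mem measurableSet_Ioi).mono fun v hv =>
        hFabs_nn m n v hv))]
    rw [habs_val m n]
  have hlint : (∑' p : ℕ × ℕ, ∫⁻ v in Set.Ioi (0:ℝ), ‖F p v‖₊) ≠ ⊤ := by
    rw [tsum_congr hlint_p, ← ENNReal.ofReal_tsum_of_nonneg
      (fun p => mul_nonneg (by positivity) (WS.term_nonneg hν hx0 hy0 p))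
      ((WS.WS2.summable_term hν x y).mul_left _)]
    exact ENNReal.ofReal_ne_top
  rw [MeasureTheory.integral_tsum hmeas hlint, tsum_congr hval, tsum_mul_left,
    WS.WS2.core_tsum hν x (-y)]
  -- final algebra
  have hk : ∀ k : ℕ, (x*(-y))^k / (k.factorial * Real.Gamma (ν+k+1))
      = (-1:ℝ)^k * (β*γ/(2*α)/2)^(2*k) / (k.factorial * Real.Gamma (ν+k+1)) := by
    intro k
    have h1 : (β*γ/(2*α)/2)^(2*k) = (x*y)^k := by
      rw [pow_mul]
      congr 1
      rw [hxd, hyd]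
      field_simp
      ring
    rw [show x * (-y) = -(x*y) by ring, neg_pow, ← h1]
  have hexp : Real.exp x * Real.exp (-y) = Real.exp ((β^2 - γ^2) / (4*α)) := by
    rw [← Real.exp_add]
    congr 1
    rw [hxd, hyd]
    ring
  have hconst : Real.Gamma (ν+1) / (2:ℝ)^ν * (α ^ (-(ν+1)) / 2)
      = (2*α) ^ (-(ν+1)) * Real.Gamma (ν+1) := by
    rw [Real.mul_rpow (by norm_num) hα.le, Real.rpow_neg (by norm_num : (0:ℝ) ≤ 2),
      show (2:ℝ)^(ν+1) = (2:ℝ)^ν * 2 from by rw [Real.rpow_add two_pos, Real.rpow_one]]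
    field_simp
  rw [tsum_congr hk, hexp, hconst, sphBessel]
  ring
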